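/- Let Δ be an oriented complete fan in ℝ^n and R a commutative ring. Then the maps d_k : Č_k(Δ,R) → Č_{k−1}(Δ,R) satisfy d_{k−1} ∘ d_k = 0 for all 2 ≤ k ≤ n; that is, (Č_*(Δ,R), d_*) is a chain complex of R-modules. -/

import Mathlib

open scoped RealInnerProductSpace

noncomputable section

abbrev Euc (n : ℕ) := EuclideanSpace ℝ (Fin n)

/-- A vector of `ℝ^n` has integral coordinates. -/
def IsIntegralVec {n : ℕ} (x : Euc n) : Prop := ∀ i, ∃ m : ℤ, x i = (m : ℝ)

/-- A rational polyhedral cone in `ℝ^n`. -/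
def IsRatPolyCone {n : ℕ} (σ : Set (Euc n)) : Prop :=
  ∃ (k : ℕ) (v : Fin k → Euc n), (∀ i, IsIntegralVec (v i)) ∧
    σ = {x | ∃ lam : Fin k → ℝ, (∀ i, 0 ≤ lam i) ∧ x = ∑ i, lam i • v i}

/-- Strict convexity of a cone: `σ ∩ (−σ) = {0}`. -/
def IsStrictlyConvexCone {n : ℕ} (σ : Set (Euc n)) : Prop := σ ∩ (-σ) = {0}

/-- The dual cone. -/
def dualCone {n : ℕ} (σ : Set (Euc n)) : Set (Euc n) := {u | ∀ x ∈ σ, 0 ≤ ⟪u, x⟫}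

/-- The orthogonal of a cone. -/
def orthCone {n : ℕ} (σ : Set (Euc n)) : Set (Euc n) := {u | ∀ x ∈ σ, ⟪u, x⟫ = 0}

/-- `τ` is a face of `σ`. -/
def IsFaceOf {n : ℕ} (τ σ : Set (Euc n)) : Prop :=
  ∃ u ∈ dualCone σ, τ = σ ∩ {x | ⟪u, x⟫ = 0}

/-- The dimension of a cone: the dimension of its linear span. -/
def coneDim {n : ℕ} (σ : Set (Euc n)) : ℕ := Module.finrank ℝ (Submodule.span ℝ σ)

/-- A fan in `ℝ^n`. -/
structure IsFan {n : ℕ} (Δ : Set (Set (Euc n))) : Prop where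
  finite : Δ.Finite
  poly : ∀ σ ∈ Δ, IsRatPolyCone σ
  strictconv : ∀ σ ∈ Δ, IsStrictlyConvexCone σ
  face_mem : ∀ σ ∈ Δ, ∀ τ, IsFaceOf τ σ → τ ∈ Δ
  inter_face : ∀ σ ∈ Δ, ∀ τ ∈ Δ, IsFaceOf (σ ∩ τ) σ ∧ IsFaceOf (σ ∩ τ) τ

/-- A complete fan: the union of the cones is everything. -/
def IsCompleteFan {n : ℕ} (Δ : Set (Set (Euc n))) : Prop :=
  IsFan Δ ∧ ⋃₀ Δ = Set.univ

/-- An orientation of a linear subspace `V ⊆ ℝ^n` of dimension `d`: a nonzero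
`d`-fold wedge `x₁ ∧ ⋯ ∧ x_d` (an element of the exterior algebra, lying in the
`d`-th exterior power) with `(x₁, …, x_d)` a basis of `V`.  For `V = {0}` this
is the empty product `1 ∈ Λ⁰(ℝ^n) = ℝ`. -/
def IsOrientationOf {n : ℕ} (V : Submodule ℝ (Euc n))
    (ω : ExteriorAlgebra ℝ (Euc n)) : Prop :=
  ∃ x : Fin (Module.finrank ℝ V) → Euc n,
    LinearIndependent ℝ x ∧ Submodule.span ℝ (Set.range x) = V ∧
      ω = (List.ofFn fun i => ExteriorAlgebra.ι ℝ (x i)).prod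

/-- An orientation of a fan: a choice, for each cone `σ ∈ Δ`, of an orientation
of the linear span `ℝσ`. -/
def IsFanOrientation {n : ℕ} (Δ : Set (Set (Euc n)))
    (ω : Set (Euc n) → ExteriorAlgebra ℝ (Euc n)) : Prop :=
  ∀ σ ∈ Δ, IsOrientationOf (Submodule.span ℝ σ) (ω σ)

/-- `ε` is the incidence-sign function of the oriented fan `(Δ, ω)`:
for `τ ≤ σ` with `dim σ = dim τ + 1`, `ε τ σ ∈ {±1}` is the sign of the unique
scalar `c_w` with `w ∧ ω_τ = c_w • ω_σ`, for any `w ∈ σ ∖ ℝτ`. -/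
def IsIncidenceSign {n : ℕ} (Δ : Set (Set (Euc n)))
    (ω : Set (Euc n) → ExteriorAlgebra ℝ (Euc n))
    (ε : Set (Euc n) → Set (Euc n) → ℤ) : Prop :=
  ∀ τ ∈ Δ, ∀ σ ∈ Δ, IsFaceOf τ σ → coneDim σ = coneDim τ + 1 →
    (ε τ σ = 1 ∨ ε τ σ = -1) ∧
    ∀ w ∈ σ \ (Submodule.span ℝ τ : Set (Euc n)), ∀ c : ℝ,
      ExteriorAlgebra.ι ℝ w * ω τ = c • ω σ → (ε τ σ = 1 ↔ 0 < c)

/-- `Δ^{(k)}`: the cones of `Δ` of codimension `k`, i.e. of dimension `n − k`. -/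
def ConesOfCodim (n : ℕ) (Δ : Set (Set (Euc n))) (k : ℕ) : Set (Set (Euc n)) :=
  {σ | σ ∈ Δ ∧ coneDim σ = n - k}

open scoped Classical in
/-- The differential `d_{k+1} : Č_{k+1}(Δ,R) → Č_k(Δ,R)` of the Čech complex of
the oriented fan `Δ`, on the free `R`-module with basis `Δ^{(k+1)}` (realized as
functions `Δ^{(k+1)} → R`): `d([τ]) = Σ_σ ε(τ,σ)[σ]`, the sum over the
`σ ∈ Δ^{(k)}` having `τ` as a face. -/
noncomputable def cechD {n : ℕ} (Δ : Set (Set (Euc n)))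
    (ε : Set (Euc n) → Set (Euc n) → ℤ) (R : Type*) [CommRing R] (k : ℕ)
    (x : ConesOfCodim n Δ (k + 1) → R) : ConesOfCodim n Δ k → R :=
  fun σ => ∑ᶠ τ : ConesOfCodim n Δ (k + 1),
    if IsFaceOf (τ : Set (Euc n)) (σ : Set (Euc n)) then (ε τ σ : R) * x τ else 0
section ConeBasics

open Submodule Set

variable {n : ℕ}

/-- The cone generated by a finite family. -/
def coneSet {n k : ℕ} (v : Fin k → Euc n) : Set (Euc n) :=
  {x | ∃ lam : Fin k → ℝ, (∀ i, 0 ≤ lam i) ∧ x = ∑ i, lam i • v i}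

lemma isRatPolyCone_iff' {σ : Set (Euc n)} (h : IsRatPolyCone σ) :
    ∃ (k : ℕ) (v : Fin k → Euc n), σ = coneSet v := by
  obtain ⟨k, v, -, rfl⟩ := h; exact ⟨k, v, rfl⟩

lemma gen_mem_coneSet {k : ℕ} (v : Fin k → Euc n) (i : Fin k) : v i ∈ coneSet v := by
  refine ⟨Pi.single i 1, fun j => ?_, ?_⟩
  · classical
    rcases eq_or_ne j i with rfl | h
    · simp
    · simp [Pi.single_apply, h]
  · classical
    simp [Pi.single_apply, ite_smul]

lemma coneSet_subset_span {k : ℕ} (v : Fin k → Euc n) :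
    coneSet v ⊆ (span ℝ (Set.range v) : Submodule ℝ (Euc n)) := by
  rintro x ⟨lam, -, rfl⟩
  exact sum_mem fun i _ => smul_mem _ _ (subset_span (mem_range_self i))

lemma span_coneSet {k : ℕ} (v : Fin k → Euc n) :
    span ℝ (coneSet v) = span ℝ (Set.range v) := by
  apply le_antisymm
  · rw [span_le]; exact coneSet_subset_span v
  · apply span_mono
    rintro x ⟨i, rfl⟩
    exact gen_mem_coneSet v i

lemma inner_eq_zero_of_mem_span {u : Euc n} {s : Set (Euc n)}
    (h : ∀ x ∈ s, ⟪u, x⟫ = 0) {x : Euc n} (hx : x ∈ span ℝ s) : ⟪u, x⟫ = 0 := by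
  induction hx using Submodule.span_induction with
  | mem x hx => exact h x hx
  | zero => exact inner_zero_right u
  | add x y _ _ hx hy => rw [inner_add_right, hx, hy, add_zero]
  | smul c x _ hx => rw [real_inner_smul_right, hx, mul_zero]

lemma IsFaceOf.subset {τ σ : Set (Euc n)} (h : IsFaceOf τ σ) : τ ⊆ σ := by
  obtain ⟨u, -, rfl⟩ := h; exact Set.inter_subset_left

lemma IsFaceOf.restrict {τ ρ σ : Set (Euc n)} (h : IsFaceOf τ σ) (hρσ : ρ ⊆ σ)
    (hτρ : τ ⊆ ρ) : IsFaceOf τ ρ := by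
  obtain ⟨u, hu, hτ⟩ := h
  refine ⟨u, fun x hx => hu x (hρσ hx), ?_⟩
  apply Set.Subset.antisymm
  · intro x hx
    exact ⟨hτρ hx, (hτ ▸ hx).2⟩
  · intro x hx
    rw [hτ]; exact ⟨hρσ hx.1, hx.2⟩

lemma dual_of_gens {k : ℕ} {v : Fin k → Euc n} {h : Euc n}
    (hh : ∀ i, 0 ≤ ⟪h, v i⟫) : h ∈ dualCone (coneSet v) := by
  rintro x ⟨lam, hlam, rfl⟩
  rw [inner_sum]
  refine Finset.sum_nonneg fun i _ => ?_
  rw [real_inner_smul_right]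
  exact mul_nonneg (hlam i) (hh i)

/-- Transitivity of face relation, for polyhedral cones. -/
lemma IsFaceOf.trans {τ ρ σ : Set (Euc n)} (hσ : IsRatPolyCone σ)
    (h1 : IsFaceOf τ ρ) (h2 : IsFaceOf ρ σ) : IsFaceOf τ σ := by
  obtain ⟨k, v, rfl⟩ := isRatPolyCone_iff' hσ
  obtain ⟨b, hb, hτ⟩ := h1
  obtain ⟨a, ha, hρ⟩ := h2
  have hva : ∀ i, 0 ≤ ⟪a, v i⟫ := fun i => ha _ (gen_mem_coneSet v i)
  -- choose N
  obtain ⟨N, hN⟩ : ∃ N : ℝ, ∀ i,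
      (if 0 < ⟪a, v i⟫ then (1 + |⟪b, v i⟫|) / ⟪a, v i⟫ else 0) ≤ N :=
    Finite.exists_le _
  have key : ∀ i, 0 ≤ N * ⟪a, v i⟫ + ⟪b, v i⟫ ∧
      (N * ⟪a, v i⟫ + ⟪b, v i⟫ = 0 → ⟪a, v i⟫ = 0 ∧ ⟪b, v i⟫ = 0) := by
    intro i
    rcases lt_or_eq_of_le (hva i) with hpos | hzero
    · have hNi := hN i
      rw [if_pos hpos] at hNi
      have h1' : 1 + |⟪b, v i⟫| ≤ N * ⟪a, v i⟫ := by
        rw [div_le_iff₀ hpos] at hNi; linarith [hNi]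
      constructor
      · have := abs_nonneg ⟪b, v i⟫
        have := neg_abs_le ⟪b, v i⟫
        linarith
      · intro habs
        exfalso
        have := neg_abs_le ⟪b, v i⟫
        linarith
    · have hvρ : v i ∈ coneSet v ∩ {x | ⟪a, x⟫ = 0} := ⟨gen_mem_coneSet v i, hzero.symm⟩
      have hbvi : 0 ≤ ⟪b, v i⟫ := hb _ (hρ ▸ hvρ)
      constructor
      · rw [← hzero]; linarith
      · intro habs
        rw [← hzero] at habs ⊢
        constructor
        · rfl
        · linarith
  refine ⟨N • a + b, ?_, ?_⟩
  · apply dual_of_gens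
    intro i
    rw [inner_add_left, real_inner_smul_left]
    exact (key i).1
  · ext x
    constructor
    · intro hx
      have hxρ : x ∈ coneSet v ∩ {x | ⟪a, x⟫ = 0} := hρ ▸ (hτ ▸ hx).1
      have hxb : ⟪b, x⟫ = 0 := (hτ ▸ hx).2
      refine ⟨hxρ.1, ?_⟩
      show ⟪N • a + b, x⟫ = 0
      rw [inner_add_left, real_inner_smul_left, hxρ.2, hxb]; ring
    · rintro ⟨hxσ, hx0⟩
      obtain ⟨lam, hlam, rfl⟩ := hxσ
      have hx0' : ∑ i, lam i * (N * ⟪a, v i⟫ + ⟪b, v i⟫) = 0 := by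
        have : ⟪N • a + b, ∑ i, lam i • v i⟫ = 0 := hx0
        rw [inner_sum] at this
        rw [← this]
        refine Finset.sum_congr rfl fun i _ => ?_
        rw [real_inner_smul_right, inner_add_left, real_inner_smul_left]
      have hterm : ∀ i ∈ Finset.univ, lam i * (N * ⟪a, v i⟫ + ⟪b, v i⟫) = 0 :=
        (Finset.sum_eq_zero_iff_of_nonneg
          (fun i _ => mul_nonneg (hlam i) (key i).1)).mp hx0'
      have hzero : ∀ i, lam i * ⟪a, v i⟫ = 0 ∧ lam i * ⟪b, v i⟫ = 0 := by
        intro i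
        rcases eq_or_ne (lam i) 0 with h0 | h0
        · rw [h0, zero_mul, zero_mul]; exact ⟨rfl, rfl⟩
        · have := hterm i (Finset.mem_univ i)
          have h2' : N * ⟪a, v i⟫ + ⟪b, v i⟫ = 0 := by
            rcases mul_eq_zero.mp this with h | h
            · exact absurd h h0
            · exact h
          obtain ⟨ha0, hb0⟩ := (key i).2 h2'
          exact ⟨by rw [ha0, mul_zero], by rw [hb0, mul_zero]⟩
      have hxa : ⟪a, ∑ i, lam i • v i⟫ = 0 := by
        rw [inner_sum]
        refine Finset.sum_eq_zero fun i _ => ?_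
        rw [real_inner_smul_right]; exact (hzero i).1
      have hxb : ⟪b, ∑ i, lam i • v i⟫ = 0 := by
        rw [inner_sum]
        refine Finset.sum_eq_zero fun i _ => ?_
        rw [real_inner_smul_right]; exact (hzero i).2
      rw [hτ]
      refine ⟨?_, hxb⟩
      rw [hρ]
      exact ⟨⟨lam, hlam, rfl⟩, hxa⟩

end ConeBasics
section Exterior

open Submodule Set ExteriorAlgebra

variable {n : ℕ}

lemma alt_eq_det_smul {k : ℕ} {U : Type*} [AddCommGroup U] [Module ℝ U]
    {N : Type*} [AddCommGroup N] [Module ℝ N]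
    (b : Module.Basis (Fin k) ℝ U) (g : U [⋀^Fin k]→ₗ[ℝ] N) (v : Fin k → U) :
    g v = b.det v • g b := by
  classical
  have h : g = (LinearMap.toSpanSingleton ℝ N (g b)).compAlternatingMap b.det := by
    refine Module.Basis.ext_alternating b fun w hw => ?_
    have hbij : Function.Bijective w := Finite.injective_iff_bijective.mp hw
    set e : Equiv.Perm (Fin k) := Equiv.ofBijective w hbij with he
    have hwe : (fun i => b (w i)) = ⇑b ∘ ⇑e := rfl
    rw [hwe, g.map_perm b e, LinearMap.compAlternatingMap_apply, b.det.map_perm b e,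
      Module.Basis.det_self, LinearMap.toSpanSingleton_apply, Units.smul_def, Units.smul_def,
      zsmul_eq_mul, mul_one, Int.cast_smul_eq_zsmul]
  conv_lhs => rw [h]
  simp [LinearMap.toSpanSingleton_apply]

lemma wedge_ne_zero {k : ℕ} {z : Fin k → Euc n} (hz : LinearIndependent ℝ z) :
    ιMulti ℝ k z ≠ 0 := by
  classical
  set U := span ℝ (Set.range z) with hU
  set b : Module.Basis (Fin k) ℝ U := Module.Basis.span hz with hb
  set L : Euc n →ₗ[ℝ] (Fin k → ℝ) :=
    LinearMap.pi fun i => (b.coord i) ∘ₗ (orthogonalProjection U : Euc n →L[ℝ] U).toLinearMap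
    with hL
  set F : (Euc n) [⋀^Fin k]→ₗ[ℝ] ℝ := (Matrix.detRowAlternating).compLinearMap L with hF
  have hFz : F z = 1 := by
    have hmat : (fun i => L (z i)) = (1 : Matrix (Fin k) (Fin k) ℝ) := by
      funext i j
      have hzU : z i ∈ U := subset_span (mem_range_self i)
      have hproj : orthogonalProjection U (z i) = b i := by
        rw [show z i = ((⟨z i, hzU⟩ : U) : Euc n) from rfl,
          orthogonalProjection_mem_subspace_eq_self]
        exact Subtype.ext (congrArg Subtype.val (Module.Basis.span_apply hz i)).symm
      simp only [hL, LinearMap.pi_apply, LinearMap.comp_apply,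
        ContinuousLinearMap.coe_coe, hproj, Module.Basis.coord_apply, Module.Basis.repr_self_apply]
      simp [Matrix.one_apply]
    show Matrix.detRowAlternating (fun i => L (z i)) = 1
    rw [hmat, Matrix.detRowAlternating, AlternatingMap.coe_mk]
    exact Matrix.det_one
  intro h0
  have h1 := congrArg (liftAlternating
    (Function.update (fun i => (0 : (Euc n) [⋀^Fin i]→ₗ[ℝ] ℝ)) k F)) h0
  rw [liftAlternating_apply_ιMulti, map_zero, Function.update_self, hFz] at h1
  exact one_ne_zero h1

lemma wedge_span_eq {k l : ℕ} {z : Fin k → Euc n} {y : Fin l → Euc n}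
    (hz : LinearIndependent ℝ z) (hy : LinearIndependent ℝ y)
    (hspan : span ℝ (Set.range z) = span ℝ (Set.range y)) :
    ∃ c : ℝ, c ≠ 0 ∧ ιMulti ℝ k z = c • ιMulti ℝ l y := by
  have hkl : k = l := by
    have h1 := finrank_span_eq_card hz
    have h2 := finrank_span_eq_card hy
    rw [hspan, h2] at h1
    simpa using h1.symm
  subst hkl
  set U := span ℝ (Set.range z) with hU
  have hyU : ∀ i, y i ∈ U := fun i => hspan ▸ subset_span (mem_range_self i)
  set b : Module.Basis (Fin k) ℝ U := Module.Basis.span hz with hb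
  set g : U [⋀^Fin k]→ₗ[ℝ] (ExteriorAlgebra ℝ (Euc n)) :=
    (ιMulti ℝ k).compLinearMap U.subtype with hg
  set y' : Fin k → U := fun i => ⟨y i, hyU i⟩ with hy'
  have hgb : g b = ιMulti ℝ k z := by
    simp only [hg, AlternatingMap.compLinearMap_apply, Submodule.coe_subtype]
    exact congrArg _ (funext fun i => congrArg Subtype.val (Module.Basis.span_apply hz i))
  have hgy : g y' = ιMulti ℝ k y := rfl
  have key := alt_eq_det_smul b g y'
  rw [hgy, hgb] at key
  rcases eq_or_ne (b.det y') 0 with h0 | h0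
  · exact absurd (by rw [key, h0, zero_smul]) (wedge_ne_zero hy)
  · exact ⟨(b.det y')⁻¹, inv_ne_zero h0,
      by rw [key, smul_smul, inv_mul_cancel₀ h0, one_smul]⟩

lemma ιMulti_cons {k : ℕ} (w : Euc n) (x : Fin k → Euc n) :
    ιMulti ℝ (k+1) (Fin.cons w x) = ι ℝ w * ιMulti ℝ k x := by
  rw [ιMulti_succ_apply, Fin.cons_zero]
  congr 1

lemma prod_eq_ιMulti {k : ℕ} (x : Fin k → Euc n) :
    (List.ofFn fun i => ι ℝ (x i)).prod = ιMulti ℝ k x := (ιMulti_apply x).symm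

end Exterior
section DiamondGeo

open Submodule Set

variable {n : ℕ}

lemma finrank_sup_singleton {W : Submodule ℝ (Euc n)} {z : Euc n} (hz : z ∉ W) :
    Module.finrank ℝ ↥(W ⊔ (ℝ ∙ z)) = Module.finrank ℝ W + 1 := by
  have hz0 : z ≠ 0 := fun h => hz (h ▸ W.zero_mem)
  have hinf : W ⊓ (ℝ ∙ z) = ⊥ := by
    rw [eq_bot_iff]
    rintro x ⟨hxW, hxz⟩
    obtain ⟨c, rfl⟩ := mem_span_singleton.mp hxz
    rcases eq_or_ne c 0 with rfl | hc
    · simp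
    · exact absurd (W.smul_mem c⁻¹ hxW) (by rwa [smul_smul, inv_mul_cancel₀ hc, one_smul])
  have h := Submodule.finrank_sup_add_finrank_inf_eq W (ℝ ∙ z)
  rw [hinf, finrank_bot, finrank_span_singleton hz0] at h
  omega

lemma inner_decomp2 {W : Submodule ℝ (Euc n)} {h x a c : Euc n} {α β : ℝ}
    (hW : ∀ y ∈ W, ⟪h, y⟫ = 0) (hmem : x - α • a - β • c ∈ W) :
    ⟪h, x⟫ = α * ⟪h, a⟫ + β * ⟪h, c⟫ := by
  have h0 := hW _ hmem
  rw [inner_sub_right, inner_sub_right, real_inner_smul_right, real_inner_smul_right] at h0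
  linarith

lemma inner_decomp1 {W : Submodule ℝ (Euc n)} {h x a : Euc n} {α : ℝ}
    (hW : ∀ y ∈ W, ⟪h, y⟫ = 0) (hmem : x - α • a ∈ W) : ⟪h, x⟫ = α * ⟪h, a⟫ := by
  have h0 := hW _ hmem
  rw [inner_sub_right, real_inner_smul_right] at h0
  linarith

lemma real_aux1 (s sM : ℝ) (h : sM ≠ 0) : s - s / sM * sM = 0 := by
  field_simp
  ring

lemma real_aux2 (th s sM : ℝ) (h : sM ≠ 0) : th * s - s / sM * (th * sM) = 0 := by
  field_simp
  ring

lemma real_aux3 (si sm sM θi θm θM : ℝ) (hm : sm ≠ 0) (hM : sM ≠ 0) (hd : θM - θm ≠ 0) :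
    si - si * (θM - θi) / (sm * (θM - θm)) * sm - si * (θi - θm) / (sM * (θM - θm)) * sM = 0 := by
  field_simp
  ring

lemma real_aux4 (si sm sM θi θm θM : ℝ) (hm : sm ≠ 0) (hM : sM ≠ 0) (hd : θM - θm ≠ 0) :
    θi * si - si * (θM - θi) / (sm * (θM - θm)) * (θm * sm)
      - si * (θi - θm) / (sM * (θM - θm)) * (θM * sM) = 0 := by
  field_simp
  ring

/-- The data of the two intermediate cones between `τ` and `σ`. -/
structure Diamond {n : ℕ} (σ τ ρ₁ ρ₂ : Set (Euc n)) (w₁ w₂ : Euc n) : Prop where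
  face1 : IsFaceOf ρ₁ σ
  face2 : IsFaceOf ρ₂ σ
  ne12 : ρ₁ ≠ ρ₂
  sub1 : τ ⊆ ρ₁
  sub2 : τ ⊆ ρ₂
  dim1 : coneDim ρ₁ = coneDim τ + 1
  dim2 : coneDim ρ₂ = coneDim τ + 1
  mem1 : w₁ ∈ ρ₁
  mem2 : w₂ ∈ ρ₂
  w1_not : w₁ ∉ Submodule.span ℝ ρ₂
  w2_not : w₂ ∉ Submodule.span ℝ ρ₁
  span1 : Submodule.span ℝ ρ₁ = Submodule.span ℝ τ ⊔ (ℝ ∙ w₁)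
  span2 : Submodule.span ℝ ρ₂ = Submodule.span ℝ τ ⊔ (ℝ ∙ w₂)
  spanσ1 : Submodule.span ℝ σ = Submodule.span ℝ ρ₁ ⊔ (ℝ ∙ w₂)
  spanσ2 : Submodule.span ℝ σ = Submodule.span ℝ ρ₂ ⊔ (ℝ ∙ w₁)
  unique : ∀ ρ, IsFaceOf ρ σ → τ ⊆ ρ → coneDim ρ = coneDim τ + 1 → ρ = ρ₁ ∨ ρ = ρ₂

set_option maxHeartbeats 2000000 in
lemma diamond_exists {σ τ : Set (Euc n)} (hσ : IsRatPolyCone σ)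
    (hτσ : IsFaceOf τ σ) (hdim : coneDim σ = coneDim τ + 2) :
    ∃ ρ₁ ρ₂ w₁ w₂, Diamond σ τ ρ₁ ρ₂ w₁ w₂ := by
  classical
  obtain ⟨k, v, rfl⟩ := isRatPolyCone_iff' hσ
  obtain ⟨u, hu, hτeq⟩ := hτσ
  set W : Submodule ℝ (Euc n) := span ℝ τ with hW
  have hτW : τ ⊆ (W : Set (Euc n)) := subset_span
  have hτσ' : τ ⊆ coneSet v := by rw [hτeq]; exact inter_subset_left
  have huτ : ∀ x ∈ τ, ⟪u, x⟫ = 0 := fun x hx => (hτeq ▸ hx).2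
  have huW : ∀ x ∈ W, ⟪u, x⟫ = 0 := fun x hx => inner_eq_zero_of_mem_span huτ hx
  have hWσ : W ≤ span ℝ (coneSet v) := span_mono hτσ'
  have hvσ : ∀ i, v i ∈ coneSet v := gen_mem_coneSet v
  have hvspan : ∀ i, v i ∈ span ℝ (coneSet v) := fun i => subset_span (hvσ i)
  -- dimension bookkeeping
  have hdim' : Module.finrank ℝ (span ℝ (coneSet v)) = Module.finrank ℝ W + 2 := hdim
  -- the orthogonal complement of W inside span σ
  set K : Submodule ℝ (Euc n) := Wᗮ ⊓ span ℝ (coneSet v) with hK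
  have hWK : W ⊔ K = span ℝ (coneSet v) := Submodule.sup_orthogonal_inf_of_hasOrthogonalProjection hWσ
  have hWKinf : W ⊓ K = ⊥ := by
    rw [eq_bot_iff]
    rintro x ⟨hxW, hxK, -⟩
    have h0 := (Submodule.mem_orthogonal _ _).mp hxK x hxW
    rw [Submodule.mem_bot]
    exact inner_self_eq_zero.mp h0
  have hK2 : Module.finrank ℝ K = 2 := by
    have h := Submodule.finrank_sup_add_finrank_inf_eq W K
    rw [hWK, hWKinf, finrank_bot, hdim'] at h
    omega
  -- u does not vanish on K
  have hp0 : ∃ p ∈ K, ⟪u, p⟫ ≠ 0 := by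
    by_contra hcon
    push_neg at hcon
    have hσsub : ∀ x ∈ span ℝ (coneSet v), ⟪u, x⟫ = 0 := by
      intro x hx
      rw [← hWK] at hx
      obtain ⟨w, hw, p, hp, rfl⟩ := Submodule.mem_sup.mp hx
      rw [inner_add_right, huW w hw, hcon p hp, add_zero]
    have hτσeq : τ = coneSet v := by
      rw [hτeq]
      apply Set.Subset.antisymm inter_subset_left
      exact fun x hx => ⟨hx, hσsub x (subset_span hx)⟩
    rw [hτσeq] at hW
    rw [← hW] at hdim'
    omega
  obtain ⟨p₀, hp₀K, hp₀u⟩ := hp0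
  -- choose b in K orthogonal to u
  set f : K →ₗ[ℝ] ℝ := ((innerSL ℝ u).toLinearMap) ∘ₗ K.subtype with hf
  have hker : LinearMap.ker f ≠ ⊥ := by
    intro hbot
    have hinj : Function.Injective f := LinearMap.ker_eq_bot.mp hbot
    have := LinearMap.finrank_le_finrank_of_injective hinj
    rw [hK2] at this
    simp [Module.finrank_self] at this
  obtain ⟨b', hb'mem, hb'ne⟩ := Submodule.exists_mem_ne_zero_of_ne_bot hker
  set b : Euc n := (b' : Euc n) with hbdef
  have hbK : b ∈ K := b'.2
  have hbne : b ≠ 0 := fun h => hb'ne (Subtype.ext h)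
  have hub : ⟪u, b⟫ = 0 := hb'mem
  have hbW : ∀ x ∈ W, ⟪b, x⟫ = 0 := by
    intro x hx
    rw [real_inner_comm]
    exact (Submodule.mem_orthogonal _ _).mp hbK.1 x hx
  have hbb : ⟪b, b⟫ ≠ 0 := fun h => hbne (inner_self_eq_zero.mp h)
  -- the key two-dimensionality fact
  have hF2 : ∀ x, x ∈ span ℝ (coneSet v) → ⟪u, x⟫ = 0 → ⟪b, x⟫ = 0 → x ∈ W := by
    intro x hx hxu hxb
    rw [← hWK] at hx
    obtain ⟨w, hw, p, hp, rfl⟩ := Submodule.mem_sup.mp hx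
    have hpu : ⟪u, p⟫ = 0 := by
      rw [inner_add_right, huW w hw] at hxu; linarith
    have hpb : ⟪b, p⟫ = 0 := by
      rw [inner_add_right, hbW w hw] at hxb; linarith
    -- show p = 0 using that ker f is spanned by b'
    have hkerb : (ℝ ∙ b') = LinearMap.ker f := by
      apply Submodule.eq_of_le_of_finrank_le
      · rwa [span_singleton_le_iff_mem]
      · have hlt : LinearMap.ker f < ⊤ := by
          rw [lt_top_iff_ne_top]
          intro htop
          have hmem : (⟨p₀, hp₀K⟩ : K) ∈ LinearMap.ker f := by rw [htop]; trivial
          exact hp₀u (by simpa [hf] using hmem)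
        have h2 := Submodule.finrank_lt (K := ℝ) (V := K) hlt.ne
        rw [hK2] at h2
        rw [finrank_span_singleton hb'ne]
        omega
    have hpker : (⟨p, hp⟩ : K) ∈ LinearMap.ker f := by
      simpa [hf, LinearMap.mem_ker] using hpu
    rw [← hkerb] at hpker
    obtain ⟨c, hc⟩ := mem_span_singleton.mp hpker
    have hpc : p = c • b := by
      have := congrArg (Subtype.val) hc
      simpa using this.symm
    have : c * ⟪b, b⟫ = 0 := by
      rw [hpc, real_inner_smul_right] at hpb; linarith
    have hc0 : c = 0 := by
      rcases mul_eq_zero.mp this with h | h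
      · exact h
      · exact absurd h hbb
    rw [hpc, hc0, zero_smul, add_zero]
    exact hw
  -- generator slopes
  have hsnn : ∀ i, 0 ≤ ⟪u, v i⟫ := fun i => hu _ (hvσ i)
  have hvWt : ∀ i, ⟪u, v i⟫ = 0 → (v i ∈ W ∧ ⟪b, v i⟫ = 0) := by
    intro i h0
    have hvτ : v i ∈ τ := by rw [hτeq]; exact ⟨hvσ i, h0⟩
    exact ⟨hτW hvτ, hbW _ (hτW hvτ)⟩
  set I : Finset (Fin k) := Finset.univ.filter (fun i => 0 < ⟪u, v i⟫) with hIdef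
  have hImem : ∀ i, i ∈ I ↔ 0 < ⟪u, v i⟫ := by
    intro i; rw [hIdef, Finset.mem_filter]; simp
  have hIne : I.Nonempty := by
    by_contra hcon
    rw [Finset.not_nonempty_iff_eq_empty] at hcon
    have hall : ∀ i, v i ∈ W := by
      intro i
      rcases lt_or_eq_of_le (hsnn i) with h | h
      · exfalso
        have : i ∈ I := (hImem i).mpr h
        rw [hcon] at this
        exact absurd this (Finset.notMem_empty i)
      · exact (hvWt i h.symm).1
    have hle : span ℝ (coneSet v) ≤ W := by
      rw [span_coneSet, span_le]
      rintro x ⟨i, rfl⟩; exact hall i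
    have := Submodule.finrank_mono hle
    omega
  set θ : Fin k → ℝ := fun i => ⟪b, v i⟫ / ⟪u, v i⟫ with hθdef
  obtain ⟨iM, hiMI, hiMmax⟩ := I.exists_max_image θ hIne
  obtain ⟨im, himI, himmin⟩ := I.exists_min_image θ hIne
  have hsM : 0 < ⟪u, v iM⟫ := (hImem iM).mp hiMI
  have hsm : 0 < ⟪u, v im⟫ := (hImem im).mp himI
  have hti : ∀ i ∈ I, ⟪b, v i⟫ = θ i * ⟪u, v i⟫ := by
    intro i hi
    rw [hθdef]
    exact (div_mul_cancel₀ _ ((hImem i).mp hi).ne').symm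
  have hsl : ∀ i ∈ I, θ im ≤ θ i ∧ θ i ≤ θ iM := fun i hi => ⟨himmin i hi, hiMmax i hi⟩
  have hzMW : v iM ∉ W := fun hmem => absurd (huW _ hmem) hsM.ne'
  have hzmW : v im ∉ W := fun hmem => absurd (huW _ hmem) hsm.ne'
  -- all slopes equal is impossible
  have hmM : θ im < θ iM := by
    rcases lt_or_ge (θ im) (θ iM) with h | h
    · exact h
    · exfalso
      have hall : ∀ i, v i ∈ W ⊔ (ℝ ∙ v iM) := by
        intro i
        rcases lt_or_eq_of_le (hsnn i) with hpos | h0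
        · have hiI : i ∈ I := (hImem i).mpr hpos
          have hθi : θ i = θ iM := le_antisymm (hsl i hiI).2 (le_trans h (hsl i hiI).1)
          have hmem : v i - (⟪u, v i⟫ / ⟪u, v iM⟫) • v iM ∈ W := by
            apply hF2
            · exact sub_mem (hvspan i) (smul_mem _ _ (hvspan iM))
            · rw [inner_sub_right, real_inner_smul_right]
              exact real_aux1 _ _ hsM.ne'
            · rw [inner_sub_right, real_inner_smul_right,
                hti i hiI, hti iM hiMI, hθi]
              exact real_aux2 _ _ _ hsM.ne'
          have hrw : v i = (v i - (⟪u, v i⟫ / ⟪u, v iM⟫) • v iM)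
              + (⟪u, v i⟫ / ⟪u, v iM⟫) • v iM := by
            rw [sub_add_cancel]
          rw [hrw]
          exact add_mem (Submodule.mem_sup_left hmem)
            (Submodule.mem_sup_right (smul_mem _ _ (mem_span_singleton_self _)))
        · exact Submodule.mem_sup_left (hvWt i h0.symm).1
      have hle : span ℝ (coneSet v) ≤ W ⊔ (ℝ ∙ v iM) := by
        rw [span_coneSet, span_le]
        rintro x ⟨i, rfl⟩; exact hall i
      have h1 := Submodule.finrank_mono hle
      rw [finrank_sup_singleton hzMW] at h1
      omega
  -- decomposition of every element of the cone
  have hgen : ∀ i, ∃ α β : ℝ, 0 ≤ α ∧ 0 ≤ β ∧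
      v i - α • v im - β • v iM ∈ W := by
    intro i
    rcases lt_or_eq_of_le (hsnn i) with hpos | h0
    · have hiI : i ∈ I := (hImem i).mpr hpos
      have hd : θ iM - θ im ≠ 0 := sub_ne_zero.mpr hmM.ne'
      refine ⟨⟪u, v i⟫ * (θ iM - θ i) / (⟪u, v im⟫ * (θ iM - θ im)),
        ⟪u, v i⟫ * (θ i - θ im) / (⟪u, v iM⟫ * (θ iM - θ im)), ?_, ?_, ?_⟩
      · apply div_nonneg
        · exact mul_nonneg hpos.le (by linarith [(hsl i hiI).2])
        · exact mul_nonneg hsm.le (by linarith)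
      · apply div_nonneg
        · exact mul_nonneg hpos.le (by linarith [(hsl i hiI).1])
        · exact mul_nonneg hsM.le (by linarith)
      · apply hF2
        · exact sub_mem (sub_mem (hvspan i) (smul_mem _ _ (hvspan im)))
            (smul_mem _ _ (hvspan iM))
        · rw [inner_sub_right, inner_sub_right, real_inner_smul_right,
            real_inner_smul_right]
          exact real_aux3 _ _ _ _ _ _ hsm.ne' hsM.ne' (sub_ne_zero.mpr hmM.ne')
        · rw [inner_sub_right, inner_sub_right, real_inner_smul_right,
            real_inner_smul_right, hti i hiI, hti iM hiMI, hti im himI]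
          exact real_aux4 _ _ _ _ _ _ hsm.ne' hsM.ne' (sub_ne_zero.mpr hmM.ne')
    · exact ⟨0, 0, le_refl _, le_refl _, by
        rw [zero_smul, zero_smul, sub_zero, sub_zero]
        exact (hvWt i h0.symm).1⟩
  choose A B hA hB hABW using hgen
  have hdecomp : ∀ x ∈ coneSet v, ∃ α β : ℝ, 0 ≤ α ∧ 0 ≤ β ∧
      x - α • v im - β • v iM ∈ W := by
    rintro x ⟨lam, hlam, rfl⟩
    refine ⟨∑ i, lam i * A i, ∑ i, lam i * B i,
      Finset.sum_nonneg fun i _ => mul_nonneg (hlam i) (hA i),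
      Finset.sum_nonneg fun i _ => mul_nonneg (hlam i) (hB i), ?_⟩
    have hrw : ∑ i, lam i • v i - (∑ i, lam i * A i) • v im
        - (∑ i, lam i * B i) • v iM
        = ∑ i, lam i • (v i - A i • v im - B i • v iM) := by
      rw [Finset.sum_smul, Finset.sum_smul, ← Finset.sum_sub_distrib,
        ← Finset.sum_sub_distrib]
      refine Finset.sum_congr rfl fun i _ => ?_
      rw [smul_sub, smul_sub, mul_smul, mul_smul]
    rw [hrw]
    exact sum_mem fun i _ => smul_mem _ _ (hABW i)
  -- the two facet functionals
  set uM : Euc n := (θ iM) • u - b with huMdef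
  set um : Euc n := b - (θ im) • u with humdef
  have huMx : ∀ x : Euc n, ⟪uM, x⟫ = θ iM * ⟪u, x⟫ - ⟪b, x⟫ := by
    intro x; rw [huMdef, inner_sub_left, real_inner_smul_left]
  have humx : ∀ x : Euc n, ⟪um, x⟫ = ⟪b, x⟫ - θ im * ⟪u, x⟫ := by
    intro x; rw [humdef, inner_sub_left, real_inner_smul_left]
  have huMW : ∀ x ∈ W, ⟪uM, x⟫ = 0 := by
    intro x hx; rw [huMx, huW x hx, hbW x hx]; ring
  have humW : ∀ x ∈ W, ⟪um, x⟫ = 0 := by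
    intro x hx; rw [humx, huW x hx, hbW x hx]; ring
  have hduM : ∀ i, 0 ≤ ⟪uM, v i⟫ := by
    intro i
    rw [huMx]
    rcases lt_or_eq_of_le (hsnn i) with hpos | h0
    · have hiI := (hImem i).mpr hpos
      rw [hti i hiI]
      have hb1 := (hsl i hiI).2
      have := mul_le_mul_of_nonneg_right hb1 hpos.le
      linarith
    · rw [← h0, (hvWt i h0.symm).2]; simp
  have hdum : ∀ i, 0 ≤ ⟪um, v i⟫ := by
    intro i
    rw [humx]
    rcases lt_or_eq_of_le (hsnn i) with hpos | h0
    · have hiI := (hImem i).mpr hpos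
      rw [hti i hiI]
      have hb1 := (hsl i hiI).1
      have := mul_le_mul_of_nonneg_right hb1 hpos.le
      linarith
    · rw [← h0, (hvWt i h0.symm).2]; simp
  set ρM : Set (Euc n) := coneSet v ∩ {x | ⟪uM, x⟫ = 0} with hρMdef
  set ρm : Set (Euc n) := coneSet v ∩ {x | ⟪um, x⟫ = 0} with hρmdef
  have hfaceM : IsFaceOf ρM (coneSet v) := ⟨uM, dual_of_gens hduM, hρMdef⟩
  have hfacem : IsFaceOf ρm (coneSet v) := ⟨um, dual_of_gens hdum, hρmdef⟩
  have hEq1 : ⟪uM, v iM⟫ = 0 := by rw [huMx, hti iM hiMI]; ring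
  have hEq2 : ⟪uM, v im⟫ = ⟪u, v im⟫ * (θ iM - θ im) := by
    rw [huMx, hti im himI]; ring
  have hEq3 : ⟪um, v im⟫ = 0 := by rw [humx, hti im himI]; ring
  have hEq4 : ⟪um, v iM⟫ = ⟪u, v iM⟫ * (θ iM - θ im) := by
    rw [humx, hti iM hiMI]; ring
  have hzMρM : v iM ∈ ρM := ⟨hvσ iM, hEq1⟩
  have hzmρm : v im ∈ ρm := ⟨hvσ im, hEq3⟩
  have hτρM : τ ⊆ ρM := fun x hx => ⟨hτσ' hx, huMW x (hτW hx)⟩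
  have hτρm : τ ⊆ ρm := fun x hx => ⟨hτσ' hx, humW x (hτW hx)⟩
  have hdne : θ iM - θ im ≠ 0 := sub_ne_zero.mpr hmM.ne'
  have hstructM : ∀ x ∈ ρM, ∃ β : ℝ, x - β • v iM ∈ W := by
    rintro x ⟨hxσ, hx0⟩
    obtain ⟨α, β, hα, -, hmem⟩ := hdecomp x hxσ
    have h1 := inner_decomp2 huMW hmem
    have hx0' : ⟪uM, x⟫ = 0 := hx0
    rw [hx0', hEq1, hEq2] at h1
    have hpos : 0 < ⟪u, v im⟫ * (θ iM - θ im) := mul_pos hsm (by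
      rcases lt_or_ge (θ im) (θ iM) with h | h
      · linarith
      · exact absurd h (not_le.mpr hmM))
    have hα0 : α = 0 := by
      have hz : α * (⟪u, v im⟫ * (θ iM - θ im)) = 0 := by linarith
      exact (mul_eq_zero.mp hz).resolve_right hpos.ne'
    refine ⟨β, ?_⟩
    rw [hα0, zero_smul, sub_zero] at hmem
    exact hmem
  have hstructm : ∀ x ∈ ρm, ∃ α : ℝ, x - α • v im ∈ W := by
    rintro x ⟨hxσ, hx0⟩
    obtain ⟨α, β, -, hβ, hmem⟩ := hdecomp x hxσ
    have h1 := inner_decomp2 humW hmem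
    have hx0' : ⟪um, x⟫ = 0 := hx0
    rw [hx0', hEq3, hEq4] at h1
    have hpos : 0 < ⟪u, v iM⟫ * (θ iM - θ im) := mul_pos hsM (by linarith)
    have hβ0 : β = 0 := by
      have hz : β * (⟪u, v iM⟫ * (θ iM - θ im)) = 0 := by linarith
      exact (mul_eq_zero.mp hz).resolve_right hpos.ne'
    refine ⟨α, ?_⟩
    rw [hβ0, zero_smul] at hmem
    rwa [sub_zero] at hmem
  have hspanM : span ℝ ρM = W ⊔ (ℝ ∙ v iM) := by
    apply le_antisymm
    · rw [span_le]
      intro x hx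
      obtain ⟨β, hmem⟩ := hstructM x hx
      have hrw : x = (x - β • v iM) + β • v iM := by rw [sub_add_cancel]
      rw [SetLike.mem_coe, hrw]
      exact add_mem (Submodule.mem_sup_left hmem)
        (Submodule.mem_sup_right (smul_mem _ _ (mem_span_singleton_self _)))
    · apply sup_le (span_mono hτρM)
      rw [span_singleton_le_iff_mem]
      exact subset_span hzMρM
  have hspanm : span ℝ ρm = W ⊔ (ℝ ∙ v im) := by
    apply le_antisymm
    · rw [span_le]
      intro x hx
      obtain ⟨α, hmem⟩ := hstructm x hx
      have hrw : x = (x - α • v im) + α • v im := by rw [sub_add_cancel]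
      rw [SetLike.mem_coe, hrw]
      exact add_mem (Submodule.mem_sup_left hmem)
        (Submodule.mem_sup_right (smul_mem _ _ (mem_span_singleton_self _)))
    · apply sup_le (span_mono hτρm)
      rw [span_singleton_le_iff_mem]
      exact subset_span hzmρm
  have hdimM : Module.finrank ℝ (span ℝ ρM) = Module.finrank ℝ W + 1 := by
    rw [hspanM, finrank_sup_singleton hzMW]
  have hdimm : Module.finrank ℝ (span ℝ ρm) = Module.finrank ℝ W + 1 := by
    rw [hspanm, finrank_sup_singleton hzmW]
  have hzmnotM : v im ∉ span ℝ ρM := by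
    rw [hspanM]
    intro hmem
    obtain ⟨w, hw, y, hy, hsum⟩ := Submodule.mem_sup.mp hmem
    obtain ⟨c, rfl⟩ := mem_span_singleton.mp hy
    have e1 : ⟪u, v im⟫ = c * ⟪u, v iM⟫ := by
      rw [← hsum, inner_add_right, huW w hw, real_inner_smul_right]; ring
    have e2 : θ im * ⟪u, v im⟫ = c * (θ iM * ⟪u, v iM⟫) := by
      rw [← hti im himI, ← hti iM hiMI, ← hsum, inner_add_right, hbW w hw,
        real_inner_smul_right]; ring
    have h7 : ⟪u, v im⟫ * (θ iM - θ im) = 0 := by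
      linear_combination θ iM * e1 - e2
    exact hdne ((mul_eq_zero.mp h7).resolve_left hsm.ne')
  have hzMnotm : v iM ∉ span ℝ ρm := by
    rw [hspanm]
    intro hmem
    obtain ⟨w, hw, y, hy, hsum⟩ := Submodule.mem_sup.mp hmem
    obtain ⟨c, rfl⟩ := mem_span_singleton.mp hy
    have e1 : ⟪u, v iM⟫ = c * ⟪u, v im⟫ := by
      rw [← hsum, inner_add_right, huW w hw, real_inner_smul_right]; ring
    have e2 : θ iM * ⟪u, v iM⟫ = c * (θ im * ⟪u, v im⟫) := by
      rw [← hti im himI, ← hti iM hiMI, ← hsum, inner_add_right, hbW w hw,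
        real_inner_smul_right]; ring
    have h7 : ⟪u, v iM⟫ * (θ iM - θ im) = 0 := by
      linear_combination e2 - θ im * e1
    exact hdne ((mul_eq_zero.mp h7).resolve_left hsM.ne')
  have hne : ρm ≠ ρM := fun heq => hzMnotm (subset_span (heq.symm ▸ hzMρM))
  have hspanσ1 : span ℝ (coneSet v) = span ℝ ρm ⊔ (ℝ ∙ v iM) := by
    symm
    apply Submodule.eq_of_le_of_finrank_le
    · apply sup_le (span_mono inter_subset_left)
      rw [span_singleton_le_iff_mem]
      exact subset_span (hvσ iM)
    · rw [finrank_sup_singleton hzMnotm, hdimm, hdim']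
  have hspanσ2 : span ℝ (coneSet v) = span ℝ ρM ⊔ (ℝ ∙ v im) := by
    symm
    apply Submodule.eq_of_le_of_finrank_le
    · apply sup_le (span_mono inter_subset_left)
      rw [span_singleton_le_iff_mem]
      exact subset_span (hvσ im)
    · rw [finrank_sup_singleton hzmnotM, hdimM, hdim']
  -- uniqueness
  have huniq : ∀ ρ, IsFaceOf ρ (coneSet v) → τ ⊆ ρ →
      coneDim ρ = coneDim τ + 1 → ρ = ρm ∨ ρ = ρM := by
    rintro ρ ⟨h, hh, rfl⟩ hτρ hdρ
    have hdρ' : Module.finrank ℝ (span ℝ (coneSet v ∩ {x | ⟪h, x⟫ = 0}))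
        = Module.finrank ℝ W + 1 := hdρ
    have hhτ : ∀ x ∈ τ, ⟪h, x⟫ = 0 := fun x hx => (hτρ hx).2
    have hhW : ∀ x ∈ W, ⟪h, x⟫ = 0 := fun x hx => inner_eq_zero_of_mem_span hhτ hx
    have hhzm : 0 ≤ ⟪h, v im⟫ := hh _ (hvσ im)
    have hhzM : 0 ≤ ⟪h, v iM⟫ := hh _ (hvσ iM)
    have hx₀ : ∃ x₀ ∈ coneSet v ∩ {x | ⟪h, x⟫ = 0}, x₀ ∉ W := by
      by_contra hcon
      push_neg at hcon
      have hsub : coneSet v ∩ {x | ⟪h, x⟫ = 0} ⊆ (W : Set (Euc n)) := hcon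
      have := Submodule.finrank_mono (span_le.mpr hsub)
      omega
    obtain ⟨x₀, hx₀mem, hx₀W⟩ := hx₀
    obtain ⟨α₀, β₀, hα₀, hβ₀, hmem₀⟩ := hdecomp x₀ hx₀mem.1
    have h1 := inner_decomp2 hhW hmem₀
    have hx₀h : ⟪h, x₀⟫ = 0 := hx₀mem.2
    rw [hx₀h] at h1
    have hzero : α₀ * ⟪h, v im⟫ = 0 ∧ β₀ * ⟪h, v iM⟫ = 0 := by
      have t1 := mul_nonneg hα₀ hhzm
      have t2 := mul_nonneg hβ₀ hhzM
      constructor <;> linarith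
    have hαβ : 0 < α₀ ∨ 0 < β₀ := by
      by_contra hcon
      push_neg at hcon
      have hα0 : α₀ = 0 := le_antisymm hcon.1 hα₀
      have hβ0 : β₀ = 0 := le_antisymm hcon.2 hβ₀
      rw [hα0, hβ0, zero_smul, zero_smul, sub_zero, sub_zero] at hmem₀
      exact hx₀W hmem₀
    rcases hαβ with hα | hβ
    · have hhzm0 : ⟪h, v im⟫ = 0 := (mul_eq_zero.mp hzero.1).resolve_left hα.ne'
      left
      have hhzMpos : 0 < ⟪h, v iM⟫ := by
        rcases lt_or_eq_of_le hhzM with h' | h'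
        · exact h'
        · exfalso
          have hρσ : coneSet v ∩ {x | ⟪h, x⟫ = 0} = coneSet v := by
            apply Set.Subset.antisymm inter_subset_left
            intro x hx
            obtain ⟨α, β, -, -, hmem⟩ := hdecomp x hx
            refine ⟨hx, ?_⟩
            show ⟪h, x⟫ = 0
            rw [inner_decomp2 hhW hmem, hhzm0, ← h']
            ring
          rw [hρσ] at hdρ'
          omega
      ext x
      constructor
      · rintro ⟨hxσ, hxh⟩
        obtain ⟨α, β, -, -, hmem⟩ := hdecomp x hxσ
        have hx1 := inner_decomp2 hhW hmem
        have hxh' : ⟪h, x⟫ = 0 := hxh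
        rw [hxh', hhzm0] at hx1
        have hβ0 : β = 0 := by
          have hz : β * ⟪h, v iM⟫ = 0 := by linarith
          exact (mul_eq_zero.mp hz).resolve_right hhzMpos.ne'
        refine ⟨hxσ, ?_⟩
        show ⟪um, x⟫ = 0
        rw [inner_decomp2 humW hmem, hEq3, hβ0]
        ring
      · rintro hxρm
        obtain ⟨α, hmem⟩ := hstructm x hxρm
        refine ⟨hxρm.1, ?_⟩
        show ⟪h, x⟫ = 0
        rw [inner_decomp1 hhW hmem, hhzm0]
        ring
    · have hhzM0 : ⟪h, v iM⟫ = 0 := (mul_eq_zero.mp hzero.2).resolve_left hβ.ne'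
      right
      have hhzmpos : 0 < ⟪h, v im⟫ := by
        rcases lt_or_eq_of_le hhzm with h' | h'
        · exact h'
        · exfalso
          have hρσ : coneSet v ∩ {x | ⟪h, x⟫ = 0} = coneSet v := by
            apply Set.Subset.antisymm inter_subset_left
            intro x hx
            obtain ⟨α, β, -, -, hmem⟩ := hdecomp x hx
            refine ⟨hx, ?_⟩
            show ⟪h, x⟫ = 0
            rw [inner_decomp2 hhW hmem, hhzM0, ← h']
            ring
          rw [hρσ] at hdρ'
          omega
      ext x
      constructor
      · rintro ⟨hxσ, hxh⟩
        obtain ⟨α, β, -, -, hmem⟩ := hdecomp x hxσ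
        have hx1 := inner_decomp2 hhW hmem
        have hxh' : ⟪h, x⟫ = 0 := hxh
        rw [hxh', hhzM0] at hx1
        have hα0 : α = 0 := by
          have hz : α * ⟪h, v im⟫ = 0 := by linarith
          exact (mul_eq_zero.mp hz).resolve_right hhzmpos.ne'
        refine ⟨hxσ, ?_⟩
        show ⟪uM, x⟫ = 0
        rw [inner_decomp2 huMW hmem, hEq1, hα0]
        ring
      · rintro hxρM
        obtain ⟨β, hmem⟩ := hstructM x hxρM
        refine ⟨hxρM.1, ?_⟩
        show ⟪h, x⟫ = 0
        rw [inner_decomp1 hhW hmem, hhzM0]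
        ring
  exact ⟨ρm, ρM, v im, v iM,
    ⟨hfacem, hfaceM, hne, hτρm, hτρM, hdimm, hdimM, hzmρm, hzMρM,
      hzmnotM, hzMnotm, hspanm, hspanM, hspanσ1, hspanσ2, huniq⟩⟩

end DiamondGeo
section Signs

open Submodule Set ExteriorAlgebra

variable {n : ℕ}

lemma sign_aux {e : ℤ} {c : ℝ} (h1 : e = 1 ∨ e = -1) (h2 : e = 1 ↔ 0 < c) (hne : c ≠ 0) :
    (e = 1 ∧ 0 < c) ∨ (e = -1 ∧ c < 0) := by
  rcases h1 with h | h
  · exact Or.inl ⟨h, h2.mp h⟩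
  · refine Or.inr ⟨h, ?_⟩
    have hc : ¬ 0 < c := fun hc => by
      have h' := h2.mpr hc
      rw [h] at h'
      norm_num at h'
    exact lt_of_le_of_ne (not_lt.mp hc) hne

lemma sign_combine {e1 e2 e3 e4 : ℤ} {c₁ d₁ c₂ d₂ : ℝ}
    (h1 : (e1 = 1 ∧ 0 < c₁) ∨ (e1 = -1 ∧ c₁ < 0))
    (h2 : (e2 = 1 ∧ 0 < d₁) ∨ (e2 = -1 ∧ d₁ < 0))
    (h3 : (e3 = 1 ∧ 0 < c₂) ∨ (e3 = -1 ∧ c₂ < 0))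
    (h4 : (e4 = 1 ∧ 0 < d₂) ∨ (e4 = -1 ∧ d₂ < 0))
    (hkey : c₁ * d₁ + c₂ * d₂ = 0) : e1 * e2 + e3 * e4 = 0 := by
  have p1 : (e1 * e2 = 1 ∧ 0 < c₁ * d₁) ∨ (e1 * e2 = -1 ∧ c₁ * d₁ < 0) := by
    rcases h1 with ⟨he1, hc⟩ | ⟨he1, hc⟩ <;> rcases h2 with ⟨he2, hd⟩ | ⟨he2, hd⟩ <;>
      rw [he1, he2]
    · exact Or.inl ⟨by norm_num, mul_pos hc hd⟩
    · exact Or.inr ⟨by norm_num, mul_neg_of_pos_of_neg hc hd⟩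
    · exact Or.inr ⟨by norm_num, mul_neg_of_neg_of_pos hc hd⟩
    · exact Or.inl ⟨by norm_num, mul_pos_of_neg_of_neg hc hd⟩
  have p2 : (e3 * e4 = 1 ∧ 0 < c₂ * d₂) ∨ (e3 * e4 = -1 ∧ c₂ * d₂ < 0) := by
    rcases h3 with ⟨he3, hc⟩ | ⟨he3, hc⟩ <;> rcases h4 with ⟨he4, hd⟩ | ⟨he4, hd⟩ <;>
      rw [he3, he4]
    · exact Or.inl ⟨by norm_num, mul_pos hc hd⟩
    · exact Or.inr ⟨by norm_num, mul_neg_of_pos_of_neg hc hd⟩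
    · exact Or.inr ⟨by norm_num, mul_neg_of_neg_of_pos hc hd⟩
    · exact Or.inl ⟨by norm_num, mul_pos_of_neg_of_neg hc hd⟩
  rcases p1 with ⟨hp1, hq1⟩ | ⟨hp1, hq1⟩ <;> rcases p2 with ⟨hp2, hq2⟩ | ⟨hp2, hq2⟩ <;>
    rw [hp1, hp2]
  · exfalso; linarith
  · norm_num
  · norm_num
  · exfalso; linarith

lemma sign_cancel {Δ : Set (Set (Euc n))}
    {ω : Set (Euc n) → ExteriorAlgebra ℝ (Euc n)}
    {ε : Set (Euc n) → Set (Euc n) → ℤ}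
    (hω : IsFanOrientation Δ ω) (hε : IsIncidenceSign Δ ω ε)
    {σ τ ρ₁ ρ₂ : Set (Euc n)} {w₁ w₂ : Euc n}
    (hσΔ : σ ∈ Δ) (hτΔ : τ ∈ Δ) (hρ₁Δ : ρ₁ ∈ Δ) (hρ₂Δ : ρ₂ ∈ Δ)
    (hfτ1 : IsFaceOf τ ρ₁) (hfτ2 : IsFaceOf τ ρ₂)
    (hf1σ : IsFaceOf ρ₁ σ) (hf2σ : IsFaceOf ρ₂ σ)
    (hdimσ : coneDim σ = coneDim τ + 2)
    (D : Diamond σ τ ρ₁ ρ₂ w₁ w₂) :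
    ε τ ρ₁ * ε ρ₁ σ + ε τ ρ₂ * ε ρ₂ σ = 0 := by
  obtain ⟨xτ, hxτli, hxτsp, hωτ⟩ := hω τ hτΔ
  obtain ⟨x1, hx1li, hx1sp, hω1⟩ := hω ρ₁ hρ₁Δ
  obtain ⟨x2, hx2li, hx2sp, hω2⟩ := hω ρ₂ hρ₂Δ
  obtain ⟨xσ, hxσli, hxσsp, hωσ⟩ := hω σ hσΔ
  have hw1τ : w₁ ∉ span ℝ τ := fun hmem => D.w1_not (span_mono D.sub2 hmem)
  have hw2τ : w₂ ∉ span ℝ τ := fun hmem => D.w2_not (span_mono D.sub1 hmem)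
  -- c₁ : ι w₁ * ω τ = c₁ • ω ρ₁
  have hli1 : LinearIndependent ℝ (Fin.cons w₁ xτ : Fin _ → Euc n) :=
    hxτli.fin_cons (by rw [hxτsp]; exact hw1τ)
  have hsp1 : span ℝ (Set.range (Fin.cons w₁ xτ : Fin _ → Euc n)) = span ℝ ρ₁ := by
    rw [Fin.range_cons, span_insert, hxτsp, sup_comm, ← D.span1]
  obtain ⟨c₁, hc₁ne, hc₁⟩ := wedge_span_eq hli1 hx1li (by rw [hsp1, hx1sp])
  have heqc₁ : ExteriorAlgebra.ι ℝ w₁ * ω τ = c₁ • ω ρ₁ := by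
    rw [hωτ, hω1, prod_eq_ιMulti, prod_eq_ιMulti, ← ιMulti_cons]
    exact hc₁
  have hsc₁ := hε τ hτΔ ρ₁ hρ₁Δ hfτ1 D.dim1
  have hiffc₁ := hsc₁.2 w₁ ⟨D.mem1, hw1τ⟩ c₁ heqc₁
  -- c₂ : ι w₂ * ω τ = c₂ • ω ρ₂
  have hli2 : LinearIndependent ℝ (Fin.cons w₂ xτ : Fin _ → Euc n) :=
    hxτli.fin_cons (by rw [hxτsp]; exact hw2τ)
  have hsp2 : span ℝ (Set.range (Fin.cons w₂ xτ : Fin _ → Euc n)) = span ℝ ρ₂ := by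
    rw [Fin.range_cons, span_insert, hxτsp, sup_comm, ← D.span2]
  obtain ⟨c₂, hc₂ne, hc₂⟩ := wedge_span_eq hli2 hx2li (by rw [hsp2, hx2sp])
  have heqc₂ : ExteriorAlgebra.ι ℝ w₂ * ω τ = c₂ • ω ρ₂ := by
    rw [hωτ, hω2, prod_eq_ιMulti, prod_eq_ιMulti, ← ιMulti_cons]
    exact hc₂
  have hsc₂ := hε τ hτΔ ρ₂ hρ₂Δ hfτ2 D.dim2
  have hiffc₂ := hsc₂.2 w₂ ⟨D.mem2, hw2τ⟩ c₂ heqc₂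
  -- d₁ : ι w₂ * ω ρ₁ = d₁ • ω σ
  have hlid1 : LinearIndependent ℝ (Fin.cons w₂ x1 : Fin _ → Euc n) :=
    hx1li.fin_cons (by rw [hx1sp]; exact D.w2_not)
  have hspd1 : span ℝ (Set.range (Fin.cons w₂ x1 : Fin _ → Euc n)) = span ℝ σ := by
    rw [Fin.range_cons, span_insert, hx1sp, sup_comm, ← D.spanσ1]
  obtain ⟨d₁, hd₁ne, hd₁⟩ := wedge_span_eq hlid1 hxσli (by rw [hspd1, hxσsp])
  have heqd₁ : ExteriorAlgebra.ι ℝ w₂ * ω ρ₁ = d₁ • ω σ := by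
    rw [hω1, hωσ, prod_eq_ιMulti, prod_eq_ιMulti, ← ιMulti_cons]
    exact hd₁
  have hsd₁ := hε ρ₁ hρ₁Δ σ hσΔ hf1σ (by have h := D.dim1; omega)
  have hiffd₁ := hsd₁.2 w₂ ⟨hf2σ.subset D.mem2, D.w2_not⟩ d₁ heqd₁
  -- d₂ : ι w₁ * ω ρ₂ = d₂ • ω σ
  have hlid2 : LinearIndependent ℝ (Fin.cons w₁ x2 : Fin _ → Euc n) :=
    hx2li.fin_cons (by rw [hx2sp]; exact D.w1_not)
  have hspd2 : span ℝ (Set.range (Fin.cons w₁ x2 : Fin _ → Euc n)) = span ℝ σ := by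
    rw [Fin.range_cons, span_insert, hx2sp, sup_comm, ← D.spanσ2]
  obtain ⟨d₂, hd₂ne, hd₂⟩ := wedge_span_eq hlid2 hxσli (by rw [hspd2, hxσsp])
  have heqd₂ : ExteriorAlgebra.ι ℝ w₁ * ω ρ₂ = d₂ • ω σ := by
    rw [hω2, hωσ, prod_eq_ιMulti, prod_eq_ιMulti, ← ιMulti_cons]
    exact hd₂
  have hsd₂ := hε ρ₂ hρ₂Δ σ hσΔ hf2σ (by have h := D.dim2; omega)
  have hiffd₂ := hsd₂.2 w₁ ⟨hf1σ.subset D.mem1, D.w1_not⟩ d₂ heqd₂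
  -- key identity
  have hωσne : ω σ ≠ 0 := by
    rw [hωσ, prod_eq_ιMulti]
    exact wedge_ne_zero hxσli
  have hkey : c₁ * d₁ + c₂ * d₂ = 0 := by
    have hA : ExteriorAlgebra.ι ℝ w₂ * (ExteriorAlgebra.ι ℝ w₁ * ω τ)
        = (c₁ * d₁) • ω σ := by
      rw [heqc₁, mul_smul_comm, heqd₁, smul_smul]
    have hB : ExteriorAlgebra.ι ℝ w₁ * (ExteriorAlgebra.ι ℝ w₂ * ω τ)
        = (c₂ * d₂) • ω σ := by
      rw [heqc₂, mul_smul_comm, heqd₂, smul_smul]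
    have hanti : ExteriorAlgebra.ι ℝ w₂ * ExteriorAlgebra.ι ℝ w₁
        = -(ExteriorAlgebra.ι ℝ w₁ * ExteriorAlgebra.ι ℝ w₂) :=
      eq_neg_of_add_eq_zero_right (ExteriorAlgebra.ι_add_mul_swap w₁ w₂)
    have hAB : (c₁ * d₁) • ω σ = -((c₂ * d₂) • ω σ) := by
      rw [← hA, ← hB, ← mul_assoc, ← mul_assoc, hanti, neg_mul]
    have hzero : (c₁ * d₁ + c₂ * d₂) • ω σ = 0 := by
      rw [add_smul, hAB]
      simp
    rcases smul_eq_zero.mp hzero with h | h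
    · exact h
    · exact absurd h hωσne
  exact sign_combine (sign_aux hsc₁.1 hiffc₁ hc₁ne) (sign_aux hsd₁.1 hiffd₁ hd₁ne)
    (sign_aux hsc₂.1 hiffc₂ hc₂ne) (sign_aux hsd₂.1 hiffd₂ hd₂ne) hkey

end Signs
section Main

open Submodule Set

/-- For an oriented complete fan `Δ` in `ℝ^n` and a
commutative ring `R`, the maps `d_k : Č_k(Δ,R) → Č_{k−1}(Δ,R)` satisfy
`d_{k−1} ∘ d_k = 0` for all `2 ≤ k ≤ n` (here `k = j + 2`); that is,
`Č_*(Δ,R)` is a chain complex of `R`-modules. -/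
theorem cech_complex_d_squared_zero {n : ℕ}
    (Δ : Set (Set (Euc n))) (hΔ : IsCompleteFan Δ)
    (ω : Set (Euc n) → ExteriorAlgebra ℝ (Euc n)) (hω : IsFanOrientation Δ ω)
    (ε : Set (Euc n) → Set (Euc n) → ℤ) (hε : IsIncidenceSign Δ ω ε)
    (R : Type*) [CommRing R] :
    ∀ j : ℕ, j + 2 ≤ n → ∀ x : ConesOfCodim n Δ (j + 2) → R,
      cechD Δ ε R j (cechD Δ ε R (j + 1) x) = 0 := by
  classical
  intro j hj x
  obtain ⟨hfan, -⟩ := hΔ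
  have hfin0 : (ConesOfCodim n Δ j).Finite := hfan.finite.subset (fun ρ hρ => hρ.1)
  have hfin1 : (ConesOfCodim n Δ (j + 1)).Finite := hfan.finite.subset (fun ρ hρ => hρ.1)
  have hfin2 : (ConesOfCodim n Δ (j + 2)).Finite := hfan.finite.subset (fun ρ hρ => hρ.1)
  haveI := hfin0.fintype
  haveI := hfin1.fintype
  haveI := hfin2.fintype
  funext σ
  simp only [Pi.zero_apply]
  -- the combinatorial key : for every τ the signed count of intermediate cones is zero
  have key : ∀ τ : ConesOfCodim n Δ (j + 2),
      (∑ ρ : ConesOfCodim n Δ (j + 1),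
        if IsFaceOf (ρ : Set (Euc n)) (σ : Set (Euc n))
            ∧ IsFaceOf (τ : Set (Euc n)) (ρ : Set (Euc n))
        then ε τ ρ * ε ρ σ else 0) = 0 := by
    intro τ
    by_cases hex : ∃ ρ : ConesOfCodim n Δ (j + 1),
        IsFaceOf (ρ : Set (Euc n)) (σ : Set (Euc n))
          ∧ IsFaceOf (τ : Set (Euc n)) (ρ : Set (Euc n))
    · obtain ⟨ρ₀, hρ₀1, hρ₀2⟩ := hex
      have hσΔ : (σ : Set (Euc n)) ∈ Δ := σ.2.1
      have hτΔ : (τ : Set (Euc n)) ∈ Δ := τ.2.1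
      have hσpoly := hfan.poly _ hσΔ
      have hτσ : IsFaceOf (τ : Set (Euc n)) (σ : Set (Euc n)) :=
        IsFaceOf.trans hσpoly hρ₀2 hρ₀1
      have hdτ : coneDim (τ : Set (Euc n)) = n - (j + 2) := τ.2.2
      have hdσ : coneDim (σ : Set (Euc n)) = n - j := σ.2.2
      have hdimσ : coneDim (σ : Set (Euc n)) = coneDim (τ : Set (Euc n)) + 2 := by omega
      obtain ⟨ρ₁, ρ₂, w₁, w₂, D⟩ := diamond_exists hσpoly hτσ hdimσ
      have hρ₁Δ : ρ₁ ∈ Δ := hfan.face_mem _ hσΔ _ D.face1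
      have hρ₂Δ : ρ₂ ∈ Δ := hfan.face_mem _ hσΔ _ D.face2
      have hd₁ : coneDim ρ₁ = n - (j + 1) := by have := D.dim1; omega
      have hd₂ : coneDim ρ₂ = n - (j + 1) := by have := D.dim2; omega
      have hfτ1 : IsFaceOf (τ : Set (Euc n)) ρ₁ := hτσ.restrict D.face1.subset D.sub1
      have hfτ2 : IsFaceOf (τ : Set (Euc n)) ρ₂ := hτσ.restrict D.face2.subset D.sub2
      set a₁ : ConesOfCodim n Δ (j + 1) := ⟨ρ₁, hρ₁Δ, hd₁⟩ with ha₁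
      set a₂ : ConesOfCodim n Δ (j + 1) := ⟨ρ₂, hρ₂Δ, hd₂⟩ with ha₂
      have hane : a₁ ≠ a₂ := fun h => D.ne12 (congrArg Subtype.val h)
      have hfilter : (Finset.univ.filter (fun ρ : ConesOfCodim n Δ (j + 1) =>
          IsFaceOf (ρ : Set (Euc n)) (σ : Set (Euc n))
            ∧ IsFaceOf (τ : Set (Euc n)) (ρ : Set (Euc n)))) = {a₁, a₂} := by
        ext ρ
        simp only [Finset.mem_filter, Finset.mem_univ, true_and, Finset.mem_insert,
          Finset.mem_singleton]
        constructor
        · rintro ⟨hρσ, hτρ⟩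
          have hdd : coneDim (ρ : Set (Euc n)) = coneDim (τ : Set (Euc n)) + 1 := by
            have := ρ.2.2; omega
          rcases D.unique ρ hρσ hτρ.subset hdd with h | h
          · left; exact Subtype.ext h
          · right; exact Subtype.ext h
        · rintro (rfl | rfl)
          · exact ⟨D.face1, hfτ1⟩
          · exact ⟨D.face2, hfτ2⟩
      rw [← Finset.sum_filter, hfilter,
        Finset.sum_insert (by simpa using hane), Finset.sum_singleton]
      exact sign_cancel hω hε hσΔ hτΔ hρ₁Δ hρ₂Δ hfτ1 hfτ2 D.face1 D.face2 hdimσ D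
    · apply Finset.sum_eq_zero
      intro ρ _
      rw [if_neg]
      exact fun hc => hex ⟨ρ, hc⟩
  -- unfolding the double finite sum
  show cechD Δ ε R j (cechD Δ ε R (j + 1) x) σ = 0
  unfold cechD
  rw [finsum_eq_sum_of_fintype]
  have step1 : ∀ ρ : ConesOfCodim n Δ (j + 1),
      (if IsFaceOf (ρ : Set (Euc n)) (σ : Set (Euc n)) then (ε ρ σ : R) *
          (∑ᶠ τ : ConesOfCodim n Δ (j + 2),
            if IsFaceOf (τ : Set (Euc n)) (ρ : Set (Euc n)) then (ε τ ρ : R) * x τ else 0)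
        else 0)
      = ∑ τ : ConesOfCodim n Δ (j + 2),
          (if IsFaceOf (ρ : Set (Euc n)) (σ : Set (Euc n))
              ∧ IsFaceOf (τ : Set (Euc n)) (ρ : Set (Euc n))
            then ((ε τ ρ * ε ρ σ : ℤ) : R) * x τ else 0) := by
    intro ρ
    rw [finsum_eq_sum_of_fintype]
    by_cases h : IsFaceOf (ρ : Set (Euc n)) (σ : Set (Euc n))
    · rw [if_pos h, Finset.mul_sum]
      refine Finset.sum_congr rfl fun τ _ => ?_
      by_cases h2 : IsFaceOf (τ : Set (Euc n)) (ρ : Set (Euc n))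
      · rw [if_pos h2, if_pos ⟨h, h2⟩]
        push_cast
        ring
      · rw [if_neg h2, if_neg (fun hc => h2 hc.2), mul_zero]
    · rw [if_neg h]
      symm
      apply Finset.sum_eq_zero
      exact fun τ _ => if_neg (fun hc => h hc.1)
  calc (∑ ρ : ConesOfCodim n Δ (j + 1),
        if IsFaceOf (ρ : Set (Euc n)) (σ : Set (Euc n)) then (ε ρ σ : R) *
          (∑ᶠ τ : ConesOfCodim n Δ (j + 2),
            if IsFaceOf (τ : Set (Euc n)) (ρ : Set (Euc n)) then (ε τ ρ : R) * x τ else 0)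
          else 0)
      = ∑ ρ : ConesOfCodim n Δ (j + 1), ∑ τ : ConesOfCodim n Δ (j + 2),
          (if IsFaceOf (ρ : Set (Euc n)) (σ : Set (Euc n))
              ∧ IsFaceOf (τ : Set (Euc n)) (ρ : Set (Euc n))
            then ((ε τ ρ * ε ρ σ : ℤ) : R) * x τ else 0) :=
        Finset.sum_congr rfl fun ρ _ => step1 ρ
    _ = ∑ τ : ConesOfCodim n Δ (j + 2), ∑ ρ : ConesOfCodim n Δ (j + 1),
          (if IsFaceOf (ρ : Set (Euc n)) (σ : Set (Euc n))
              ∧ IsFaceOf (τ : Set (Euc n)) (ρ : Set (Euc n))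
            then ((ε τ ρ * ε ρ σ : ℤ) : R) * x τ else 0) := Finset.sum_comm
    _ = ∑ τ : ConesOfCodim n Δ (j + 2),
          ((∑ ρ : ConesOfCodim n Δ (j + 1),
            (if IsFaceOf (ρ : Set (Euc n)) (σ : Set (Euc n))
              ∧ IsFaceOf (τ : Set (Euc n)) (ρ : Set (Euc n))
            then (ε τ ρ * ε ρ σ : ℤ) else 0) : ℤ) : R) * x τ := by
        refine Finset.sum_congr rfl fun τ _ => ?_
        rw [Int.cast_sum, Finset.sum_mul]
        refine Finset.sum_congr rfl fun ρ _ => ?_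
        split_ifs with h
        · rfl
        · rw [Int.cast_zero, zero_mul]
    _ = 0 := by
        refine Finset.sum_eq_zero fun τ _ => ?_
        rw [key τ, Int.cast_zero, zero_mul]

end Main

end
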